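/- arXiv:1808.07226 — 2 statements merged into one kernel-verified Lean document; each statement's English description precedes it below -/
import Mathlib

section
/- Let X_1,…,X_n be jointly distributed random variables taking values in a finite set, let V = [n], and let S ⊆ V be any subset. Then for every k with 2 ≤ k ≤ n, E_{F ∼ Unif(V choose k)} [C(X_F | X_S)] = Σ_{r=2}^{k} (k choose r) (−1)^r E_{R ∼ Unif(V choose r)} [I(X_R | X_S)], where the expectations are over uniformly random subsets of V of the indicated sizes. -/
open Finset

noncomputable section
open scoped Classical

/-- A probability mass function on a finite type. -/
def IsDist {Ω : Type*} [Fintype Ω] (μ : Ω → ℝ) : Prop :=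
  (∀ x, 0 ≤ μ x) ∧ ∑ x, μ x = 1

variable {n : ℕ} {α : Type*} [Fintype α] [Nonempty α]

/-- Marginal probability that the coordinates in `A` agree with `y`. -/
def marg (μ : (Fin n → α) → ℝ) (A : Finset (Fin n)) (y : Fin n → α) : ℝ :=
  ∑ x : Fin n → α, if ∀ i ∈ A, x i = y i then μ x else 0

/-- Shannon entropy (natural log) of the marginal of `μ` on the coordinates in `A`,
i.e. `H(X_A)`; the sum ranges over canonical representatives of assignments to `A`. -/
def margEnt (μ : (Fin n → α) → ℝ) (A : Finset (Fin n)) : ℝ :=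
  -∑ y ∈ Finset.univ.filter (fun y : Fin n → α => ∀ i ∉ A, y i = Classical.arbitrary α),
      marg μ A y * Real.log (marg μ A y)

/-- Conditional entropy `H(X_F | X_S) = H(X_{F∪S}) − H(X_S)`. -/
def condEnt (μ : (Fin n → α) → ℝ) (F S : Finset (Fin n)) : ℝ :=
  margEnt μ (F ∪ S) - margEnt μ S

/-- Conditional multivariate total correlation
`C(X_F | X_S) = ∑_{i∈F} H(X_i | X_S) − H(X_F | X_S)`. -/
def condTC (μ : (Fin n → α) → ℝ) (F S : Finset (Fin n)) : ℝ :=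
  (∑ i ∈ F, condEnt μ {i} S) - condEnt μ F S

/-- Conditional multivariate mutual information
`I(X_R | X_S) = ∑_{∅ ≠ T ⊆ R} (−1)^{|T|−1} H(X_T | X_S)`. -/
def condMI (μ : (Fin n → α) → ℝ) (R S : Finset (Fin n)) : ℝ :=
  ∑ T ∈ R.powerset.filter (fun T => T.Nonempty),
      (-1 : ℝ) ^ (T.card + 1) * condEnt μ T S

/-! ### Auxiliary lemmas -/

lemma alt_sum_aux (T F : Finset (Fin n)) (hT : T ⊆ F) :
    ∑ R ∈ F.powerset.filter (fun R => T ⊆ R), (-1:ℝ)^R.card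
      = if T = F then (-1:ℝ)^F.card else 0 := by
  have key : ∑ R ∈ F.powerset.filter (fun R => T ⊆ R), (-1:ℝ)^R.card
      = ∑ A ∈ (F \ T).powerset, (-1:ℝ)^(A.card + T.card) := by
    refine Finset.sum_nbij' (fun R => R \ T) (fun A => A ∪ T) ?_ ?_ ?_ ?_ ?_
    · intro R hR
      simp only [mem_filter, mem_powerset] at hR ⊢
      exact sdiff_subset_sdiff hR.1 (Finset.Subset.refl _)
    · intro A hA
      simp only [mem_powerset] at hA
      simp only [mem_filter, mem_powerset]
      exact ⟨Finset.union_subset (hA.trans (sdiff_subset)) hT, Finset.subset_union_right⟩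
    · intro R hR
      simp only [mem_filter, mem_powerset] at hR
      exact Finset.sdiff_union_of_subset hR.2
    · intro A hA
      simp only [mem_powerset] at hA
      have : Disjoint A T := Finset.disjoint_of_subset_left hA (Finset.sdiff_disjoint)
      show (A ∪ T) \ T = A
      rw [Finset.union_sdiff_cancel_right this]
    · intro R hR
      simp only [mem_filter, mem_powerset] at hR
      rw [Finset.card_sdiff_add_card_eq_card hR.2]
  rw [key]
  have h2 : ∑ A ∈ (F \ T).powerset, (-1:ℝ)^(A.card + T.card)
      = (-1:ℝ)^T.card * ∑ A ∈ (F \ T).powerset, (-1:ℝ)^A.card := by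
    rw [Finset.mul_sum]; apply Finset.sum_congr rfl; intros; ring
  rw [h2]
  have hz : (∑ A ∈ (F \ T).powerset, (-1:ℝ)^A.card)
      = if F \ T = ∅ then 1 else 0 := by
    have := @Finset.sum_powerset_neg_one_pow_card (Fin n) _ (F \ T)
    exact_mod_cast congrArg (Int.cast : ℤ → ℝ) this
  rw [hz]
  have hiff : F \ T = ∅ ↔ T = F := by
    rw [Finset.sdiff_eq_empty_iff_subset]
    exact ⟨fun h => Finset.Subset.antisymm hT h, fun h => h ▸ Finset.Subset.refl _⟩
  by_cases h : T = F
  · simp [h, hiff]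
  · simp [h, (not_iff_not.mpr hiff).mpr h]

lemma condMI_expand (μ : (Fin n → α) → ℝ) (S R F : Finset (Fin n)) (hRF : R ⊆ F) :
    condMI μ R S = ∑ T ∈ F.powerset,
      if T ⊆ R ∧ T.Nonempty then (-1:ℝ)^(T.card + 1) * condEnt μ T S else 0 := by
  rw [condMI, ← Finset.sum_filter]
  apply Finset.sum_congr
  · ext T
    simp only [mem_filter, mem_powerset]
    constructor
    · rintro ⟨h1, h2⟩; exact ⟨h1.trans hRF, h1, h2⟩
    · rintro ⟨_, h1, h2⟩; exact ⟨h1, h2⟩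
  · intros; rfl

lemma condTC_eq_alt (μ : (Fin n → α) → ℝ) (S F : Finset (Fin n)) (hF : 2 ≤ F.card) :
    condTC μ F S = ∑ R ∈ F.powerset.filter (fun R => 2 ≤ R.card),
      (-1:ℝ)^R.card * condMI μ R S := by
  have hRHS : ∑ R ∈ F.powerset.filter (fun R => 2 ≤ R.card), (-1:ℝ)^R.card * condMI μ R S
      = ∑ R ∈ F.powerset, ∑ T ∈ F.powerset,
          (if 2 ≤ R.card ∧ T ⊆ R ∧ T.Nonempty then
            (-1:ℝ)^R.card * ((-1:ℝ)^(T.card + 1) * condEnt μ T S) else 0) := by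
    rw [Finset.sum_filter]
    apply Finset.sum_congr rfl
    intro R hR
    simp only [mem_powerset] at hR
    by_cases h2 : 2 ≤ R.card
    · rw [if_pos h2, condMI_expand μ S R F hR, Finset.mul_sum]
      apply Finset.sum_congr rfl
      intro T _
      by_cases h3 : T ⊆ R ∧ T.Nonempty
      · rw [if_pos h3, if_pos ⟨h2, h3⟩]
      · rw [if_neg h3, if_neg (by tauto), mul_zero]
    · rw [if_neg h2]
      symm
      apply Finset.sum_eq_zero
      intro T _
      rw [if_neg (by tauto)]
  rw [hRHS, Finset.sum_comm]
  have hpt : ∀ T ∈ F.powerset,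
      (∑ R ∈ F.powerset, if 2 ≤ R.card ∧ T ⊆ R ∧ T.Nonempty then
        (-1:ℝ)^R.card * ((-1:ℝ)^(T.card + 1) * condEnt μ T S) else 0)
      = (if T = F then -(condEnt μ F S) else 0)
        + (if T.card = 1 then condEnt μ T S else 0) := by
    intro T hT
    simp only [mem_powerset] at hT
    by_cases hne : T.Nonempty
    · set c : ℝ := (-1:ℝ)^(T.card + 1) * condEnt μ T S with hc
      have hsplit : (∑ R ∈ F.powerset, if 2 ≤ R.card ∧ T ⊆ R ∧ T.Nonempty then
            (-1:ℝ)^R.card * c else 0)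
          = (∑ R ∈ F.powerset, if T ⊆ R then (-1:ℝ)^R.card * c else 0)
            - (∑ R ∈ F.powerset, if T ⊆ R ∧ ¬ 2 ≤ R.card then (-1:ℝ)^R.card * c else 0) := by
        rw [← Finset.sum_sub_distrib]
        apply Finset.sum_congr rfl
        intro R _
        by_cases h1 : T ⊆ R <;> by_cases h2 : 2 ≤ R.card <;> simp [h1, h2, hne]
      rw [hsplit]
      have hA : (∑ R ∈ F.powerset, if T ⊆ R then (-1:ℝ)^R.card * c else 0)
          = (if T = F then (-1:ℝ)^F.card else 0) * c := by
        rw [← Finset.sum_filter, ← Finset.sum_mul, alt_sum_aux T F hT]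
      have hB : (∑ R ∈ F.powerset, if T ⊆ R ∧ ¬ 2 ≤ R.card then (-1:ℝ)^R.card * c else 0)
          = (if T.card = 1 then (-1:ℝ) * c else 0) := by
        have : ∀ R ∈ F.powerset,
            (if T ⊆ R ∧ ¬ 2 ≤ R.card then (-1:ℝ)^R.card * c else 0)
            = (if R = T ∧ T.card = 1 then (-1:ℝ) * c else 0) := by
          intro R _
          by_cases h : T ⊆ R ∧ ¬ 2 ≤ R.card
          · have h1 : 1 ≤ T.card := Finset.card_pos.mpr hne
            have h2 : T.card ≤ R.card := Finset.card_le_card h.1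
            have h3 : R.card ≤ 1 := by omega
            have hRT : R = T := (Finset.eq_of_subset_of_card_le h.1 (by omega)).symm
            have hT1 : T.card = 1 := by omega
            have hR1 : R.card = 1 := by omega
            rw [if_pos h, if_pos (show R = T ∧ T.card = 1 from ⟨hRT, hT1⟩), hR1, pow_one]
          · rw [if_neg h, if_neg ?_]
            rintro ⟨rfl, h1⟩
            exact h ⟨Finset.Subset.refl _, by omega⟩
        rw [Finset.sum_congr rfl this]
        by_cases hP : T.card = 1
        · simp only [hP, and_true]
          rw [Finset.sum_ite_eq' F.powerset T (fun _ => (-1:ℝ) * c)]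
          simp [Finset.mem_powerset.mpr hT, hP]
        · simp [hP]
      rw [hA, hB]
      by_cases hTF : T = F
      · have hF1 : ¬ F.card = 1 := by omega
        subst hTF
        simp only [if_pos rfl, if_neg hF1]
        have : (-1:ℝ)^T.card * ((-1:ℝ)^(T.card+1) * condEnt μ T S)
            = -(condEnt μ T S) := by
          rw [← mul_assoc, ← pow_add]
          have : Odd (T.card + (T.card + 1)) := ⟨T.card, by ring⟩
          rw [this.neg_one_pow]; ring
        rw [hc]
        simpa using this
      · rw [if_neg hTF, if_neg hTF]
        by_cases h1 : T.card = 1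
        · simp only [if_pos h1, hc, h1]
          norm_num
        · simp [h1]
    · have hTe : T = ∅ := Finset.not_nonempty_iff_eq_empty.mp hne
      subst hTe
      have h1 : ¬ (∅ : Finset (Fin n)).card = 1 := by simp
      have h2 : ¬ (∅ : Finset (Fin n)) = F := by
        intro h; rw [← h] at hF; simp at hF
      simp [h1, h2]
  rw [Finset.sum_congr rfl hpt, Finset.sum_add_distrib]
  have hfirst : (∑ T ∈ F.powerset, if T = F then -(condEnt μ F S) else 0)
      = -(condEnt μ F S) := by
    rw [Finset.sum_ite_eq' F.powerset F (fun _ => -(condEnt μ F S))]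
    simp
  have hsecond : (∑ T ∈ F.powerset, if T.card = 1 then condEnt μ T S else 0)
      = ∑ i ∈ F, condEnt μ {i} S := by
    rw [← Finset.sum_filter, ← Finset.powersetCard_eq_filter, Finset.powersetCard_one,
      Finset.sum_map]
    rfl
  rw [hfirst, hsecond, condTC]
  ring

lemma count_supersets (R : Finset (Fin n)) (k : ℕ) (hRk : R.card ≤ k) (hkn : k ≤ n) :
    ((Finset.powersetCard k (Finset.univ : Finset (Fin n))).filter
      (fun F => R ⊆ F)).card = (n - R.card).choose (k - R.card) := by
  have hbij : ((Finset.powersetCard k (Finset.univ : Finset (Fin n))).filter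
      (fun F => R ⊆ F)).card
      = ((Finset.univ \ R).powersetCard (k - R.card)).card := by
    refine Finset.card_nbij' (fun F => F \ R) (fun A => A ∪ R) ?_ ?_ ?_ ?_
    · intro F hF
      simp only [Finset.mem_coe, mem_filter, Finset.mem_powersetCard] at hF
      rw [Finset.mem_coe, Finset.mem_powersetCard]
      exact ⟨sdiff_subset_sdiff (Finset.subset_univ F) (Finset.Subset.refl _),
        by rw [Finset.card_sdiff_of_subset hF.2, hF.1.2]⟩
    · intro A hA
      rw [Finset.mem_coe, Finset.mem_powersetCard] at hA
      have hdisj : Disjoint A R := Finset.disjoint_of_subset_left hA.1 Finset.sdiff_disjoint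
      simp only [Finset.mem_coe, mem_filter, Finset.mem_powersetCard]
      refine ⟨⟨Finset.subset_univ _, ?_⟩, Finset.subset_union_right⟩
      rw [Finset.card_union_of_disjoint hdisj, hA.2]
      omega
    · intro F hF
      simp only [Finset.mem_coe, mem_filter] at hF
      exact Finset.sdiff_union_of_subset hF.2
    · intro A hA
      rw [Finset.mem_coe, Finset.mem_powersetCard] at hA
      have hdisj : Disjoint A R := Finset.disjoint_of_subset_left hA.1 Finset.sdiff_disjoint
      show (A ∪ R) \ R = A
      rw [Finset.union_sdiff_cancel_right hdisj]
  rw [hbij, Finset.card_powersetCard, Finset.card_sdiff_of_subset (Finset.subset_univ R),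
    Finset.card_univ, Fintype.card_fin]

/-- The identity
`E_{F ∼ (V choose k)}[C(X_F|X_S)] = ∑_{r=2}^k (k choose r)(−1)^r E_{R ∼ (V choose r)}[I(X_R|X_S)]`. -/
theorem tc_as_alternating_sum_of_mi (μ : (Fin n → α) → ℝ) (hμ : IsDist μ)
    (S : Finset (Fin n)) (k : ℕ) (hk2 : 2 ≤ k) (hkn : k ≤ n) :
    (∑ F ∈ Finset.powersetCard k (Finset.univ : Finset (Fin n)), condTC μ F S)
        / (n.choose k : ℝ)
      = ∑ r ∈ Finset.Icc 2 k, (k.choose r : ℝ) * (-1 : ℝ) ^ r *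
          ((∑ R ∈ Finset.powersetCard r (Finset.univ : Finset (Fin n)), condMI μ R S)
            / (n.choose r : ℝ)) := by
  set g : Finset (Fin n) → ℝ := fun R => (-1:ℝ)^R.card * condMI μ R S with hg
  -- Step 1: rewrite each condTC and decompose by cardinality
  have step1 : (∑ F ∈ Finset.powersetCard k (Finset.univ : Finset (Fin n)), condTC μ F S)
      = ∑ F ∈ Finset.powersetCard k (Finset.univ : Finset (Fin n)),
          ∑ r ∈ Finset.Icc 2 k,
            ∑ R ∈ Finset.powersetCard r (Finset.univ : Finset (Fin n)),
              (if R ⊆ F then g R else 0) := by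
    apply Finset.sum_congr rfl
    intro F hF
    rw [Finset.mem_powersetCard] at hF
    rw [condTC_eq_alt μ S F (by omega)]
    -- partition the filtered powerset by cardinality
    have hpart : F.powerset.filter (fun R => 2 ≤ R.card)
        = (Finset.Icc 2 k).biUnion (fun r => F.powersetCard r) := by
      ext R
      simp only [mem_filter, mem_powerset, Finset.mem_biUnion, Finset.mem_Icc,
        Finset.mem_powersetCard]
      constructor
      · rintro ⟨h1, h2⟩
        exact ⟨R.card, ⟨h2, (Finset.card_le_card h1).trans hF.2.le⟩, h1, rfl⟩
      · rintro ⟨r, ⟨hr1, _⟩, hRF, rfl⟩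
        exact ⟨hRF, hr1⟩
    rw [hpart, Finset.sum_biUnion]
    · apply Finset.sum_congr rfl
      intro r _
      rw [← Finset.sum_filter]
      apply Finset.sum_congr
      · ext R
        simp only [Finset.mem_powersetCard, mem_filter]
        constructor
        · rintro ⟨h1, h2⟩; exact ⟨⟨h1.trans (Finset.subset_univ F), h2⟩, h1⟩
        · rintro ⟨⟨_, h2⟩, h1⟩; exact ⟨h1, h2⟩
      · intros; rfl
    · intro a _ b _ hab
      apply Finset.disjoint_left.mpr
      intro R hRa hRb
      rw [Finset.mem_powersetCard] at hRa hRb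
      exact hab (hRa.2.symm.trans hRb.2)
  rw [step1, Finset.sum_comm, Finset.sum_div]
  apply Finset.sum_congr rfl
  intro r hr
  rw [Finset.mem_Icc] at hr
  have hrk : r ≤ k := hr.2
  have hrn : r ≤ n := hrk.trans hkn
  rw [Finset.sum_comm]
  -- inner sum over F: count supersets
  have hinner : ∀ R ∈ Finset.powersetCard r (Finset.univ : Finset (Fin n)),
      (∑ F ∈ Finset.powersetCard k (Finset.univ : Finset (Fin n)),
        if R ⊆ F then g R else 0)
      = ((n - r).choose (k - r) : ℝ) * g R := by
    intro R hR
    rw [Finset.mem_powersetCard] at hR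
    rw [← Finset.sum_filter, Finset.sum_const, count_supersets R k (by omega) hkn, hR.2]
    simp [nsmul_eq_mul]
  rw [Finset.sum_congr rfl hinner, ← Finset.mul_sum]
  have hgsum : (∑ R ∈ Finset.powersetCard r (Finset.univ : Finset (Fin n)), g R)
      = (-1:ℝ)^r * ∑ R ∈ Finset.powersetCard r (Finset.univ : Finset (Fin n)),
          condMI μ R S := by
    rw [Finset.mul_sum]
    apply Finset.sum_congr rfl
    intro R hR
    rw [Finset.mem_powersetCard] at hR
    rw [hg]
    simp [hR.2]
  rw [hgsum]
  have hnk : (0:ℝ) < (n.choose k : ℝ) := by exact_mod_cast Nat.choose_pos hkn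
  have hnr : (0:ℝ) < (n.choose r : ℝ) := by exact_mod_cast Nat.choose_pos hrn
  have hid : ((n - r).choose (k - r) : ℝ) * (n.choose r : ℝ)
      = (k.choose r : ℝ) * (n.choose k : ℝ) := by
    have h := Nat.choose_mul (n := n) hrk
    have hnat : (n - r).choose (k - r) * n.choose r = k.choose r * n.choose k := by
      rw [mul_comm, ← h, mul_comm]
    exact_mod_cast congrArg (Nat.cast : ℕ → ℝ) hnat
  field_simp
  linear_combination (
    (∑ R ∈ Finset.powersetCard r (Finset.univ : Finset (Fin n)), condMI μ R S)) * hid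


end
end

section
/- Let X_1,…,X_n be jointly distributed random variables taking values in a finite set, let V = [n], and fix t and a subset S ∈ (V choose t). Then for any k ≤ n − t, E_{F ∼ Unif(V choose k)} [C(X_F | X_S)] ≤ E_{E ∼ Unif((V∖S) choose k)} [C(X_E | X_S)], where F is a uniformly random k-subset of V and E is a uniformly random k-subset of V∖S. -/
open Finset

noncomputable section
open scoped Classical

variable {n : ℕ} {α : Type*} [Fintype α] [Nonempty α]

/-! ### Auxiliary: projections and marginal distributions -/

/-- Projection onto coordinates in `A`, canonical value elsewhere. -/
def pj (A : Finset (Fin n)) (x : Fin n → α) : Fin n → α :=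
  fun i => if i ∈ A then x i else Classical.arbitrary α

lemma pj_pj (A B : Finset (Fin n)) (x : Fin n → α) :
    pj A (pj B x) = pj (A ∩ B) x := by
  funext i; by_cases hA : i ∈ A <;> by_cases hB : i ∈ B <;> simp [pj, hA, hB]

/-- Pushforward (marginal) distribution on representatives. -/
def nu (μ : (Fin n → α) → ℝ) (A : Finset (Fin n)) (y : Fin n → α) : ℝ :=
  ∑ x : Fin n → α, if pj A x = y then μ x else 0

lemma nu_nonneg {μ : (Fin n → α) → ℝ} (h0 : ∀ x, 0 ≤ μ x) (A : Finset (Fin n))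
    (y : Fin n → α) : 0 ≤ nu μ A y := by
  refine Finset.sum_nonneg fun x _ => ?_
  split <;> [exact h0 x; exact le_rfl]

lemma nu_eq_zero {μ : (Fin n → α) → ℝ} {A : Finset (Fin n)} {y : Fin n → α}
    (h : pj A y ≠ y) : nu μ A y = 0 := by
  refine Finset.sum_eq_zero fun x _ => ?_
  rw [if_neg]
  intro hxy
  exact h (by rw [← hxy, pj_pj, Finset.inter_self])

lemma sum_nu_mul (μ : (Fin n → α) → ℝ) (A : Finset (Fin n)) (f : (Fin n → α) → ℝ) :
    ∑ y : Fin n → α, nu μ A y * f y = ∑ x : Fin n → α, μ x * f (pj A x) := by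
  unfold nu
  simp_rw [Finset.sum_mul, ite_mul, zero_mul]
  rw [Finset.sum_comm]
  refine Finset.sum_congr rfl fun x _ => ?_
  rw [Finset.sum_ite_eq (Finset.univ) (pj A x) (fun y => μ x * f y), if_pos (Finset.mem_univ _)]

lemma sum_nu (μ : (Fin n → α) → ℝ) (A : Finset (Fin n)) :
    ∑ y : Fin n → α, nu μ A y = ∑ x : Fin n → α, μ x := by
  have := sum_nu_mul μ A (fun _ => 1)
  simpa using this

lemma marg_eq_nu {μ : (Fin n → α) → ℝ} {A : Finset (Fin n)} {y : Fin n → α}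
    (hy : ∀ i ∉ A, y i = Classical.arbitrary α) : marg μ A y = nu μ A y := by
  refine Finset.sum_congr rfl fun x _ => ?_
  congr 1
  simp only [eq_iff_iff]
  constructor
  · intro h
    funext i
    by_cases hi : i ∈ A
    · simp [pj, hi, h i hi]
    · simp [pj, hi, (hy i hi).symm]
  · intro h i hi
    have := congrFun h i
    simpa [pj, hi] using this

lemma margEnt_eq (μ : (Fin n → α) → ℝ) (A : Finset (Fin n)) :
    margEnt μ A = -∑ y : Fin n → α, nu μ A y * Real.log (nu μ A y) := by
  unfold margEnt
  congr 1
  rw [← Finset.sum_filter_add_sum_filter_not Finset.univ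
    (fun y : Fin n → α => ∀ i ∉ A, y i = Classical.arbitrary α)
    (fun y => nu μ A y * Real.log (nu μ A y))]
  have h2 : ∑ y ∈ Finset.univ.filter
      (fun y : Fin n → α => ¬ ∀ i ∉ A, y i = Classical.arbitrary α),
      nu μ A y * Real.log (nu μ A y) = 0 := by
    refine Finset.sum_eq_zero fun y hy => ?_
    rw [Finset.mem_filter] at hy
    have : pj A y ≠ y := by
      intro h
      exact hy.2 (fun i hi => by rw [← h]; simp [pj, hi])
    rw [nu_eq_zero this, zero_mul]
  rw [h2, add_zero]
  refine Finset.sum_congr rfl fun y hy => ?_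
  rw [Finset.mem_filter] at hy
  rw [marg_eq_nu hy.2]

lemma le_nu {μ : (Fin n → α) → ℝ} (h0 : ∀ x, 0 ≤ μ x) (A : Finset (Fin n))
    (x : Fin n → α) : μ x ≤ nu μ A (pj A x) := by
  have : μ x = if pj A x = pj A x then μ x else 0 := by simp
  rw [this]
  exact Finset.single_le_sum (f := fun x' => if pj A x' = pj A x then μ x' else 0)
    (fun x' _ => by split <;> [exact h0 x'; exact le_rfl]) (Finset.mem_univ x)

lemma nu_mono {μ : (Fin n → α) → ℝ} (h0 : ∀ x, 0 ≤ μ x) {A B : Finset (Fin n)}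
    (hAB : A ⊆ B) (x : Fin n → α) : nu μ B (pj B x) ≤ nu μ A (pj A x) := by
  refine Finset.sum_le_sum fun x' _ => ?_
  by_cases h : pj B x' = pj B x
  · have hA : pj A x' = pj A x := by
      have h1 : pj A (pj B x') = pj A (pj B x) := by rw [h]
      rwa [pj_pj, pj_pj, Finset.inter_eq_left.mpr hAB] at h1
    rw [if_pos h, if_pos hA]
  · rw [if_neg h]
    split <;> [exact h0 x'; exact le_rfl]


/-! ### Submodularity of entropy -/

lemma nu_fiber_sum {μ : (Fin n → α) → ℝ} {M A : Finset (Fin n)} (hMA : M ⊆ A)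
    (z : Fin n → α) :
    ∑ u ∈ Finset.univ.filter (fun u : Fin n → α => pj M u = z), nu μ A u = nu μ M z := by
  rw [Finset.sum_filter]
  have : ∀ u : Fin n → α, (if pj M u = z then nu μ A u else 0)
      = nu μ A u * (if pj M u = z then (1:ℝ) else 0) := by
    intro u; split <;> simp
  simp_rw [this]
  rw [sum_nu_mul μ A (fun u => if pj M u = z then (1:ℝ) else 0)]
  unfold nu
  refine Finset.sum_congr rfl fun x _ => ?_
  rw [pj_pj, Finset.inter_eq_left.mpr hMA]
  split <;> simp

set_option maxHeartbeats 1000000 in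
lemma margEnt_submod {μ : (Fin n → α) → ℝ} (hμ : IsDist μ) (A B : Finset (Fin n)) :
    margEnt μ (A ∪ B) + margEnt μ (A ∩ B) ≤ margEnt μ A + margEnt μ B := by
  obtain ⟨h0, h1⟩ := hμ
  set P := A ∪ B with hP
  set M := A ∩ B with hM
  have hAP : A ⊆ P := Finset.subset_union_left
  have hBP : B ⊆ P := Finset.subset_union_right
  have hMA : M ⊆ A := Finset.inter_subset_left
  have hMB : M ⊆ B := Finset.inter_subset_right
  -- abbreviations
  set a : (Fin n → α) → ℝ := fun x => nu μ A (pj A x) with ha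
  set b : (Fin n → α) → ℝ := fun x => nu μ B (pj B x) with hb
  set p : (Fin n → α) → ℝ := fun x => nu μ P (pj P x) with hp
  set m : (Fin n → α) → ℝ := fun x => nu μ M (pj M x) with hm
  rw [margEnt_eq μ P, margEnt_eq μ M, margEnt_eq μ A, margEnt_eq μ B,
    sum_nu_mul μ P, sum_nu_mul μ M, sum_nu_mul μ A, sum_nu_mul μ B]
  have key : ∑ x : Fin n → α,
      μ x * (Real.log (a x) + Real.log (b x) - Real.log (p x) - Real.log (m x)) ≤ 0 := by
    have step1 : ∀ x : Fin n → α,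
        μ x * (Real.log (a x) + Real.log (b x) - Real.log (p x) - Real.log (m x))
          ≤ μ x * (a x * b x / (p x * m x)) - μ x := by
      intro x
      rcases eq_or_lt_of_le (h0 x) with hx | hx
      · rw [← hx]; simp
      · have hpa : 0 < p x := lt_of_lt_of_le hx (le_nu h0 P x)
        have hma : 0 < m x := lt_of_lt_of_le hx (le_nu h0 M x)
        have haa : 0 < a x := lt_of_lt_of_le hx (le_nu h0 A x)
        have hba : 0 < b x := lt_of_lt_of_le hx (le_nu h0 B x)
        have hz : 0 < a x * b x / (p x * m x) := by positivity
        have hlog : Real.log (a x) + Real.log (b x) - Real.log (p x) - Real.log (m x)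
            = Real.log (a x * b x / (p x * m x)) := by
          rw [Real.log_div (by positivity) (by positivity),
            Real.log_mul haa.ne' hba.ne', Real.log_mul hpa.ne' hma.ne']
          ring
        rw [hlog]
        have := Real.log_le_sub_one_of_pos hz
        calc μ x * Real.log (a x * b x / (p x * m x))
            ≤ μ x * (a x * b x / (p x * m x) - 1) := by
              exact mul_le_mul_of_nonneg_left this (le_of_lt hx)
          _ = μ x * (a x * b x / (p x * m x)) - μ x := by ring
    have step2 : ∑ x : Fin n → α, μ x * (a x * b x / (p x * m x)) ≤ 1 := by
      -- rewrite as a sum over representatives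
      set g : (Fin n → α) → ℝ := fun y => nu μ A (pj A y) * nu μ B (pj B y)
          / (nu μ P (pj P y) * nu μ M (pj M y)) with hgdef
      have hg : ∀ x : Fin n → α, a x * b x / (p x * m x) = g (pj P x) := by
        intro x
        simp only [ha, hb, hp, hm, hgdef, pj_pj,
          Finset.inter_eq_left.mpr hAP, Finset.inter_eq_left.mpr hBP,
          Finset.inter_eq_left.mpr (hMA.trans hAP), Finset.inter_self]
      simp_rw [hg]
      rw [← sum_nu_mul μ P g]
      -- bound each term, reducing to a sum over representatives of `P`
      have hterm : ∀ y : Fin n → α, nu μ P y * g y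
          ≤ (if pj P y = y then nu μ A (pj A y) * nu μ B (pj B y) / nu μ M (pj M y) else 0) := by
        intro y
        by_cases hy : pj P y = y
        · rw [if_pos hy]
          rcases eq_or_lt_of_le (nu_nonneg h0 P y) with hq | hq
          · rw [← hq, zero_mul]
            have := nu_nonneg h0 A (pj A y)
            have := nu_nonneg h0 B (pj B y)
            have := nu_nonneg h0 M (pj M y)
            positivity
          · have hgy : g y = nu μ A (pj A y) * nu μ B (pj B y)
                / (nu μ P y * nu μ M (pj M y)) := by rw [hgdef]; simp only; rw [hy]
            rw [hgy]
            by_cases hm0 : nu μ M (pj M y) = 0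
            · simp [hm0]
            · rw [mul_div_assoc']
              rw [mul_div_mul_left _ _ hq.ne']
        · rw [if_neg hy, nu_eq_zero hy, zero_mul]
      calc ∑ y : Fin n → α, nu μ P y * g y
          ≤ ∑ y : Fin n → α, (if pj P y = y then
              nu μ A (pj A y) * nu μ B (pj B y) / nu μ M (pj M y) else 0) :=
            Finset.sum_le_sum fun y _ => hterm y
        _ = ∑ y ∈ Finset.univ.filter (fun y : Fin n → α => pj P y = y),
              nu μ A (pj A y) * nu μ B (pj B y) / nu μ M (pj M y) :=
            (Finset.sum_filter _ _).symm
        _ ≤ 1 := ?_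
      -- group by the value of `pj M`
      rw [← Finset.sum_fiberwise (Finset.univ.filter (fun y : Fin n → α => pj P y = y))
        (fun y => pj M y)
        (fun y => nu μ A (pj A y) * nu μ B (pj B y) / nu μ M (pj M y))]
      have fiber_bound : ∀ z : Fin n → α,
          ∑ y ∈ (Finset.univ.filter (fun y : Fin n → α => pj P y = y)).filter
              (fun y => pj M y = z),
            nu μ A (pj A y) * nu μ B (pj B y) / nu μ M (pj M y) ≤ nu μ M z := by
        intro z
        set fib := (Finset.univ.filter (fun y : Fin n → α => pj P y = y)).filter
            (fun y => pj M y = z) with hfib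
        have hmem : ∀ y ∈ fib, pj P y = y ∧ pj M y = z := by
          intro y hy
          simp only [hfib, Finset.mem_filter, Finset.mem_univ, true_and] at hy
          exact hy
        have hrw : ∑ y ∈ fib, nu μ A (pj A y) * nu μ B (pj B y) / nu μ M (pj M y)
            = (∑ y ∈ fib, nu μ A (pj A y) * nu μ B (pj B y)) / nu μ M z := by
          rw [Finset.sum_div]
          refine Finset.sum_congr rfl fun y hy => ?_
          rw [(hmem y hy).2]
        rw [hrw]
        -- key inequality: the numerator is at most `nu μ M z ^ 2`
        have hC1 : ∑ y ∈ fib, nu μ A (pj A y) * nu μ B (pj B y)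
            ≤ nu μ M z * nu μ M z := by
          classical
          set e : (Fin n → α) → (Fin n → α) × (Fin n → α) := fun y => (pj A y, pj B y)
            with hedef
          have hinj : Set.InjOn e fib := by
            intro y hy y' hy' hee
            have h1 := (hmem y hy).1
            have h1' := (hmem y' hy').1
            have hA : pj A y = pj A y' := congrArg Prod.fst hee
            have hB : pj B y = pj B y' := congrArg Prod.snd hee
            funext i
            by_cases hiA : i ∈ A
            · have := congrFun hA i
              simpa [pj, hiA] using this
            · by_cases hiB : i ∈ B
              · have := congrFun hB i
                simpa [pj, hiB] using this
              · have hiP : i ∉ P := by simp [hP, hiA, hiB]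
                have e1 := congrFun h1 i
                have e1' := congrFun h1' i
                simp only [pj, if_neg hiP] at e1 e1'
                rw [← e1, ← e1']
          have himg : ∑ y ∈ fib, nu μ A (pj A y) * nu μ B (pj B y)
              = ∑ q ∈ fib.image e, nu μ A q.1 * nu μ B q.2 := by
            rw [Finset.sum_image (fun y hy y' hy' h => hinj hy hy' h)]
          rw [himg]
          have hsub : fib.image e ⊆
              (Finset.univ.filter (fun u : Fin n → α => pj M u = z)) ×ˢ
              (Finset.univ.filter (fun v : Fin n → α => pj M v = z)) := by
            intro q hq
            rw [Finset.mem_image] at hq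
            obtain ⟨y, hy, rfl⟩ := hq
            have h2 := (hmem y hy).2
            simp only [Finset.mem_product, Finset.mem_filter, Finset.mem_univ, true_and, hedef]
            constructor
            · rw [pj_pj, Finset.inter_eq_left.mpr hMA, h2]
            · rw [pj_pj, Finset.inter_eq_left.mpr hMB, h2]
          calc ∑ q ∈ fib.image e, nu μ A q.1 * nu μ B q.2
              ≤ ∑ q ∈ (Finset.univ.filter (fun u : Fin n → α => pj M u = z)) ×ˢ
                  (Finset.univ.filter (fun v : Fin n → α => pj M v = z)),
                  nu μ A q.1 * nu μ B q.2 := by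
                refine Finset.sum_le_sum_of_subset_of_nonneg hsub fun q _ _ => ?_
                exact mul_nonneg (nu_nonneg h0 A q.1) (nu_nonneg h0 B q.2)
            _ = (∑ u ∈ Finset.univ.filter (fun u : Fin n → α => pj M u = z), nu μ A u)
                * (∑ v ∈ Finset.univ.filter (fun v : Fin n → α => pj M v = z), nu μ B v) := by
                rw [Finset.sum_product, Finset.sum_mul_sum]
            _ = nu μ M z * nu μ M z := by rw [nu_fiber_sum hMA, nu_fiber_sum hMB]
        rcases eq_or_lt_of_le (nu_nonneg h0 M z) with hz | hz
        · rw [← hz, div_zero]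
        · rw [div_le_iff₀ hz]
          exact hC1
      calc ∑ z : Fin n → α, ∑ y ∈ (Finset.univ.filter
            (fun y : Fin n → α => pj P y = y)).filter (fun y => pj M y = z),
            nu μ A (pj A y) * nu μ B (pj B y) / nu μ M (pj M y)
          ≤ ∑ z : Fin n → α, nu μ M z := Finset.sum_le_sum fun z _ => fiber_bound z
        _ = 1 := by rw [sum_nu]; exact h1
    calc ∑ x : Fin n → α,
        μ x * (Real.log (a x) + Real.log (b x) - Real.log (p x) - Real.log (m x))
        ≤ ∑ x : Fin n → α, (μ x * (a x * b x / (p x * m x)) - μ x) :=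
          Finset.sum_le_sum fun x _ => step1 x
      _ = (∑ x : Fin n → α, μ x * (a x * b x / (p x * m x))) - 1 := by
          rw [Finset.sum_sub_distrib, h1]
      _ ≤ 0 := by linarith
  have expand : ∑ x : Fin n → α,
      μ x * (Real.log (a x) + Real.log (b x) - Real.log (p x) - Real.log (m x))
      = (∑ x : Fin n → α, μ x * Real.log (a x)) + (∑ x : Fin n → α, μ x * Real.log (b x))
        - (∑ x : Fin n → α, μ x * Real.log (p x)) - (∑ x : Fin n → α, μ x * Real.log (m x)) := by
    simp only [mul_add, mul_sub, Finset.sum_add_distrib, Finset.sum_sub_distrib]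
  rw [expand] at key
  linarith


/-! ### Properties of conditional total correlation -/

lemma condEnt_singleton_mem {μ : (Fin n → α) → ℝ} {S : Finset (Fin n)} {i : Fin n}
    (h : i ∈ S) : condEnt μ {i} S = 0 := by
  unfold condEnt
  rw [Finset.union_eq_right.mpr (Finset.singleton_subset_iff.mpr h), sub_self]

lemma condTC_sdiff (μ : (Fin n → α) → ℝ) (F S : Finset (Fin n)) :
    condTC μ F S = condTC μ (F \ S) S := by
  unfold condTC condEnt
  have h1 : F ∪ S = F \ S ∪ S := by rw [Finset.sdiff_union_self_eq_union]
  have h2 : ∑ i ∈ F, condEnt μ {i} S = ∑ i ∈ F \ S, condEnt μ {i} S := by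
    rw [← Finset.sum_filter_add_sum_filter_not F (· ∈ S) (fun i => condEnt μ {i} S)]
    have hz : ∑ i ∈ F.filter (· ∈ S), condEnt μ {i} S = 0 :=
      Finset.sum_eq_zero fun i hi => condEnt_singleton_mem (Finset.mem_filter.mp hi).2
    rw [hz, zero_add, Finset.sdiff_eq_filter]
  unfold condEnt at h2
  rw [h1, h2]

lemma condTC_insert_le {μ : (Fin n → α) → ℝ} (hμ : IsDist μ) {S E : Finset (Fin n)}
    {i : Fin n} (hiE : i ∉ E) (hiS : i ∉ S) :
    condTC μ E S ≤ condTC μ (insert i E) S := by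
  unfold condTC
  rw [Finset.sum_insert hiE]
  have hsub := margEnt_submod hμ ({i} ∪ S) (E ∪ S)
  have hU : ({i} ∪ S) ∪ (E ∪ S) = insert i E ∪ S := by
    rw [Finset.insert_eq]
    ext j; simp [Finset.mem_union]; tauto
  have hI : ({i} ∪ S) ∩ (E ∪ S) = S := by
    ext j
    simp only [Finset.mem_inter, Finset.mem_union, Finset.mem_singleton]
    constructor
    · rintro ⟨hj1 | hj1, hj2 | hj2⟩ <;> first
      | assumption
      | (exfalso; subst hj1; exact hiE hj2)
      | (exfalso; subst hj1; exact hiS hj2)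
    · intro hj; exact ⟨Or.inr hj, Or.inr hj⟩
  rw [hU, hI] at hsub
  unfold condEnt
  linarith

lemma condTC_mono {μ : (Fin n → α) → ℝ} (hμ : IsDist μ) {S E₀ E : Finset (Fin n)}
    (hE : E₀ ⊆ E) (hES : ∀ i ∈ E, i ∉ S) : condTC μ E₀ S ≤ condTC μ E S := by
  have aux : ∀ D : Finset (Fin n), (∀ i ∈ D, i ∉ S) → Disjoint D E₀ →
      condTC μ E₀ S ≤ condTC μ (E₀ ∪ D) S := by
    intro D
    induction D using Finset.induction_on with
    | empty => intro _ _; rw [Finset.union_empty]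
    | @insert j D hjD ih =>
      intro hDS hdisj
      have hjE₀ : j ∉ E₀ := by
        intro h
        exact (Finset.disjoint_left.mp hdisj (Finset.mem_insert_self j D)) h
      have hdisj' : Disjoint D E₀ :=
        (Finset.disjoint_insert_left.mp hdisj).2
      have step := ih (fun i hi => hDS i (Finset.mem_insert_of_mem hi)) hdisj'
      have hjED : j ∉ E₀ ∪ D := by
        simp only [Finset.mem_union]
        rintro (h | h) <;> [exact hjE₀ h; exact hjD h]
      have step2 := condTC_insert_le hμ hjED (hDS j (Finset.mem_insert_self j D))
      rw [Finset.union_insert]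
      linarith
  have := aux (E \ E₀) (fun i hi => hES i (Finset.sdiff_subset hi))
    (Finset.disjoint_left.mpr fun i hi => (Finset.mem_sdiff.mp hi).2)
  rwa [Finset.union_sdiff_of_subset hE] at this


/-! ### Counting lemmas -/

/-- Reindex a sum over `k`-subsets of the universe according to `F ↦ (F ∩ S, F \ S)`. -/
lemma sum_powersetCard_sdiff (S : Finset (Fin n)) (k : ℕ) (T : Finset (Fin n) → ℝ) :
    ∑ F ∈ Finset.powersetCard k (Finset.univ : Finset (Fin n)), T (F \ S)
      = ∑ j ∈ Finset.range (k + 1), (S.card.choose (k - j) : ℝ) *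
          ∑ E ∈ Finset.powersetCard j ((Finset.univ : Finset (Fin n)) \ S), T E := by
  classical
  set W := (Finset.univ : Finset (Fin n)) \ S with hW
  -- Step 1: reindex to pairs
  have step1 : ∑ F ∈ Finset.powersetCard k (Finset.univ : Finset (Fin n)), T (F \ S)
      = ∑ p ∈ (S.powerset ×ˢ W.powerset).filter (fun p => p.1.card + p.2.card = k),
          T p.2 := by
    refine Finset.sum_nbij' (fun F => (F ∩ S, F \ S)) (fun p => p.1 ∪ p.2) ?_ ?_ ?_ ?_ ?_
    · intro F hF
      rw [Finset.mem_powersetCard] at hF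
      simp only [Finset.mem_filter, Finset.mem_product, Finset.mem_powerset]
      refine ⟨⟨Finset.inter_subset_right, ?_⟩, ?_⟩
      · rw [hW]; exact Finset.sdiff_subset_sdiff (Finset.subset_univ F) Finset.Subset.rfl
      · rw [Finset.card_inter_add_card_sdiff, hF.2]
    · intro p hp
      simp only [Finset.mem_filter, Finset.mem_product, Finset.mem_powerset] at hp
      rw [Finset.mem_powersetCard]
      refine ⟨Finset.subset_univ _, ?_⟩
      have hdisj : Disjoint p.1 p.2 := by
        refine Finset.disjoint_left.mpr fun i hi1 hi2 => ?_
        have := hp.1.2 hi2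
        rw [hW, Finset.mem_sdiff] at this
        exact this.2 (hp.1.1 hi1)
      rw [Finset.card_union_of_disjoint hdisj, hp.2]
    · intro F _
      ext i
      simp only [Finset.mem_union, Finset.mem_inter, Finset.mem_sdiff]
      tauto
    · intro p hp
      simp only [Finset.mem_filter, Finset.mem_product, Finset.mem_powerset] at hp
      have h1 : p.1 ⊆ S := hp.1.1
      have h2 : ∀ i ∈ p.2, i ∉ S := by
        intro i hi
        have := hp.1.2 hi
        rw [hW, Finset.mem_sdiff] at this
        exact this.2
      have e1 : (p.1 ∪ p.2) ∩ S = p.1 := by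
        ext i
        simp only [Finset.mem_inter, Finset.mem_union]
        constructor
        · rintro ⟨hi1 | hi1, hi2⟩
          · exact hi1
          · exact absurd hi2 (h2 i hi1)
        · intro hi; exact ⟨Or.inl hi, h1 hi⟩
      have e2 : (p.1 ∪ p.2) \ S = p.2 := by
        ext i
        simp only [Finset.mem_sdiff, Finset.mem_union]
        constructor
        · rintro ⟨hi1 | hi1, hi2⟩
          · exact absurd (h1 hi1) hi2
          · exact hi1
        · intro hi; exact ⟨Or.inr hi, h2 i hi⟩
      rw [Prod.ext_iff]
      exact ⟨e1, e2⟩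
    · intro F _; rfl
  rw [step1]
  -- Step 2: sum over the product, inner sum over G ⊆ S gives a binomial factor
  rw [Finset.sum_filter, Finset.sum_product]
  rw [Finset.sum_comm]
  have step2 : ∀ E : Finset (Fin n),
      ∑ G ∈ S.powerset, (if G.card + E.card = k then T E else 0)
        = (if E.card ≤ k then (S.card.choose (k - E.card) : ℝ) else 0) * T E := by
    intro E
    rw [← Finset.sum_filter, Finset.sum_const, nsmul_eq_mul]
    congr 1
    by_cases h : E.card ≤ k
    · rw [if_pos h]
      congr 1
      have : S.powerset.filter (fun G => G.card + E.card = k)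
          = S.powersetCard (k - E.card) := by
        ext G
        simp only [Finset.mem_filter, Finset.mem_powerset, Finset.mem_powersetCard]
        constructor
        · rintro ⟨h1, h2⟩; exact ⟨h1, by omega⟩
        · rintro ⟨h1, h2⟩; exact ⟨h1, by omega⟩
      rw [this, Finset.card_powersetCard]
    · rw [if_neg h]
      have : S.powerset.filter (fun G => G.card + E.card = k) = ∅ := by
        ext G
        simp only [Finset.mem_filter, Finset.notMem_empty, iff_false, not_and]
        intro _; omega
      rw [this]
      simp
  simp_rw [step2]
  -- Step 3: group the powerset of W by cardinality
  rw [Finset.sum_powerset W (fun E => (if E.card ≤ k then (S.card.choose (k - E.card) : ℝ)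
    else 0) * T E)]
  have step3 : ∀ j ∈ Finset.range (W.card + 1),
      ∑ E ∈ W.powersetCard j, (if E.card ≤ k then (S.card.choose (k - E.card) : ℝ)
          else 0) * T E
        = (if j ≤ k then (1:ℝ) else 0) * ((S.card.choose (k - j) : ℝ) *
            ∑ E ∈ Finset.powersetCard j W, T E) := by
    intro j _
    rw [Finset.mul_sum, Finset.mul_sum]
    refine Finset.sum_congr rfl fun E hE => ?_
    rw [Finset.mem_powersetCard] at hE
    rw [hE.2]
    split <;> ring
  rw [Finset.sum_congr rfl step3]
  -- convert range (W.card + 1) to range (k + 1)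
  simp_rw [ite_mul, one_mul, zero_mul]
  rw [← Finset.sum_filter]
  have : (Finset.range (W.card + 1)).filter (fun j => j ≤ k)
      = (Finset.range (min W.card k + 1)) := by
    ext j
    simp only [Finset.mem_filter, Finset.mem_range]
    omega
  rw [this]
  by_cases hwk : W.card < k
  · have hmin : min W.card k = W.card := by omega
    rw [hmin]
    refine Finset.sum_subset (by intro j hj; simp only [Finset.mem_range] at *; omega) ?_
    intro j hj hj'
    simp only [Finset.mem_range] at hj hj'
    have : W.card < j := by omega
    rw [Finset.powersetCard_eq_empty.mpr this]
    simp
  · have hmin : min W.card k = k := by omega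
    rw [hmin]

/-- The number of `k`-subsets of `W` containing a fixed `j`-subset `E₀`. -/
lemma card_powersetCard_superset {W E₀ : Finset (Fin n)} {j k : ℕ}
    (hE₀ : E₀ ⊆ W) (hcard : E₀.card = j) (hjk : j ≤ k) :
    ((Finset.powersetCard k W).filter (fun E => E₀ ⊆ E)).card
      = (W.card - j).choose (k - j) := by
  classical
  have : ((Finset.powersetCard k W).filter (fun E => E₀ ⊆ E)).card
      = (Finset.powersetCard (k - j) (W \ E₀)).card := by
    refine Finset.card_nbij' (fun E => E \ E₀) (fun D => E₀ ∪ D) ?_ ?_ ?_ ?_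
    · intro E hE
      simp only [Finset.mem_coe, Finset.mem_filter, Finset.mem_powersetCard] at hE ⊢
      refine ⟨Finset.sdiff_subset_sdiff hE.1.1 Finset.Subset.rfl, ?_⟩
      rw [Finset.card_sdiff_of_subset hE.2, hE.1.2, hcard]
    · intro D hD
      simp only [Finset.mem_coe, Finset.mem_filter, Finset.mem_powersetCard] at hD ⊢
      have hDW : D ⊆ W := hD.1.trans (Finset.sdiff_subset)
      have hdisj : Disjoint E₀ D := by
        refine Finset.disjoint_left.mpr fun i hi1 hi2 => ?_
        exact (Finset.mem_sdiff.mp (hD.1 hi2)).2 hi1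
      refine ⟨⟨Finset.union_subset hE₀ hDW, ?_⟩, Finset.subset_union_left⟩
      rw [Finset.card_union_of_disjoint hdisj, hD.2, hcard]
      omega
    · intro E hE
      simp only [Finset.mem_coe, Finset.mem_filter, Finset.mem_powersetCard] at hE
      exact Finset.union_sdiff_of_subset hE.2
    · intro D hD
      simp only [Finset.mem_coe, Finset.mem_powersetCard] at hD
      refine Finset.union_sdiff_cancel_left ?_
      refine Finset.disjoint_left.mpr fun i hi1 hi2 => ?_
      exact (Finset.mem_sdiff.mp (hD.1 hi2)).2 hi1
  rw [this, Finset.card_powersetCard, Finset.card_sdiff_of_subset hE₀, hcard]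

/-- Averaging monotone set functions over uniform subsets of increasing size. -/
lemma avg_mono {W : Finset (Fin n)} {j k : ℕ} (T : Finset (Fin n) → ℝ)
    (hT : ∀ E₀ E : Finset (Fin n), E₀ ⊆ E → E ⊆ W → T E₀ ≤ T E)
    (hjk : j ≤ k) (hkW : k ≤ W.card) :
    ((W.card - j).choose (k - j) : ℝ) * ∑ E ∈ Finset.powersetCard j W, T E
      ≤ (k.choose j : ℝ) * ∑ E ∈ Finset.powersetCard k W, T E := by
  classical
  have lower : ((W.card - j).choose (k - j) : ℝ) * ∑ E ∈ Finset.powersetCard j W, T E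
      = ∑ E ∈ Finset.powersetCard k W, ∑ E₀ ∈ Finset.powersetCard j E, T E₀ := by
    have inner : ∀ E ∈ Finset.powersetCard k W, ∑ E₀ ∈ Finset.powersetCard j E, T E₀
        = ∑ E₀ ∈ Finset.powersetCard j W, (if E₀ ⊆ E then T E₀ else 0) := by
      intro E hE
      rw [Finset.mem_powersetCard] at hE
      rw [← Finset.sum_filter]
      congr 1
      ext E₀
      simp only [Finset.mem_powersetCard, Finset.mem_filter]
      constructor
      · rintro ⟨h1, h2⟩; exact ⟨⟨h1.trans hE.1, h2⟩, h1⟩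
      · rintro ⟨⟨_, h2⟩, h3⟩; exact ⟨h3, h2⟩
    rw [Finset.sum_congr rfl inner, Finset.sum_comm]
    have : ∀ E₀ ∈ Finset.powersetCard j W,
        ∑ E ∈ Finset.powersetCard k W, (if E₀ ⊆ E then T E₀ else 0)
          = ((W.card - j).choose (k - j) : ℝ) * T E₀ := by
      intro E₀ hE₀
      rw [Finset.mem_powersetCard] at hE₀
      rw [← Finset.sum_filter, Finset.sum_const, nsmul_eq_mul,
        card_powersetCard_superset hE₀.1 hE₀.2 hjk]
    rw [Finset.sum_congr rfl this, ← Finset.mul_sum]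
  rw [lower]
  have upper : ∀ E ∈ Finset.powersetCard k W, ∑ E₀ ∈ Finset.powersetCard j E, T E₀
      ≤ (k.choose j : ℝ) * T E := by
    intro E hE
    rw [Finset.mem_powersetCard] at hE
    calc ∑ E₀ ∈ Finset.powersetCard j E, T E₀
        ≤ ∑ E₀ ∈ Finset.powersetCard j E, T E := by
          refine Finset.sum_le_sum fun E₀ hE₀ => ?_
          rw [Finset.mem_powersetCard] at hE₀
          exact hT E₀ E hE₀.1 hE.1
      _ = (k.choose j : ℝ) * T E := by
          rw [Finset.sum_const, nsmul_eq_mul, Finset.card_powersetCard, hE.2]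
  calc ∑ E ∈ Finset.powersetCard k W, ∑ E₀ ∈ Finset.powersetCard j E, T E₀
      ≤ ∑ E ∈ Finset.powersetCard k W, (k.choose j : ℝ) * T E :=
        Finset.sum_le_sum upper
    _ = (k.choose j : ℝ) * ∑ E ∈ Finset.powersetCard k W, T E := by
        rw [Finset.mul_sum]


/-- Averaging inequality: for `S` of size `t` and `k ≤ n − t`, the average of `C(X_F | X_S)` over
uniform `k`-subsets `F` of `V` is at most the average over uniform `k`-subsets of `V ∖ S`. -/
theorem avg_tc_le_avg_tc_complement (μ : (Fin n → α) → ℝ) (hμ : IsDist μ)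
    (t k : ℕ) (S : Finset (Fin n)) (hS : S.card = t) (hk : k ≤ n - t) :
    (∑ F ∈ Finset.powersetCard k (Finset.univ : Finset (Fin n)), condTC μ F S)
        / (n.choose k : ℝ)
      ≤ (∑ E ∈ Finset.powersetCard k ((Finset.univ : Finset (Fin n)) \ S), condTC μ E S)
          / ((n - t).choose k : ℝ) := by
  classical
  set W := (Finset.univ : Finset (Fin n)) \ S with hWdef
  have ht : t ≤ n := by
    rw [← hS]
    simpa using Finset.card_le_univ S
  have hWcard : W.card = n - t := by
    rw [hWdef, Finset.card_sdiff_of_subset (Finset.subset_univ S), hS, Finset.card_univ,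
      Fintype.card_fin]
  set T : Finset (Fin n) → ℝ := fun E => condTC μ E S with hTdef
  set A : ℕ → ℝ := fun j => ∑ E ∈ Finset.powersetCard j W, T E with hAdef
  have hT : ∀ E₀ E : Finset (Fin n), E₀ ⊆ E → E ⊆ W → T E₀ ≤ T E := by
    intro E₀ E h hEW
    exact condTC_mono hμ h (fun i hi => (Finset.mem_sdiff.mp (hEW hi)).2)
  have hkW : k ≤ W.card := by rw [hWcard]; exact hk
  have hkn : k ≤ n := hk.trans (Nat.sub_le n t)
  have hCk : (0:ℝ) < ((n - t).choose k : ℝ) := by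
    exact_mod_cast Nat.choose_pos hk
  have hCn : (0:ℝ) < (n.choose k : ℝ) := by
    exact_mod_cast Nat.choose_pos hkn
  -- rewrite the numerator of the left side
  have hnum1 : ∑ F ∈ Finset.powersetCard k (Finset.univ : Finset (Fin n)), condTC μ F S
      = ∑ j ∈ Finset.range (k + 1), (t.choose (k - j) : ℝ) * A j := by
    have e1 : ∑ F ∈ Finset.powersetCard k (Finset.univ : Finset (Fin n)), condTC μ F S
        = ∑ F ∈ Finset.powersetCard k (Finset.univ : Finset (Fin n)), T (F \ S) := by
      exact Finset.sum_congr rfl fun F _ => condTC_sdiff μ F S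
    rw [e1, sum_powersetCard_sdiff S k T, hS]
  -- each level-j average is at most the level-k average
  have hAj : ∀ j ∈ Finset.range (k + 1),
      A j * ((n - t).choose k : ℝ) ≤ ((n - t).choose j : ℝ) * A k := by
    intro j hj
    rw [Finset.mem_range] at hj
    have hjk : j ≤ k := by omega
    have key := avg_mono T hT hjk hkW
    rw [hWcard] at key
    have hid : (n - t).choose k * k.choose j = (n - t).choose j * (n - t - j).choose (k - j) :=
      Nat.choose_mul hjk
    have hckj : (0:ℝ) < (k.choose j : ℝ) := by exact_mod_cast Nat.choose_pos hjk
    have h2 : ((n - t).choose j : ℝ) * (((n - t - j).choose (k - j) : ℝ) * A j)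
        ≤ ((n - t).choose j : ℝ) * ((k.choose j : ℝ) * A k) := by
      refine mul_le_mul_of_nonneg_left key (by positivity)
    have h3 : (((n - t).choose k : ℝ) * (k.choose j : ℝ)) * A j
        ≤ (((n - t).choose j : ℝ) * (k.choose j : ℝ)) * A k := by
      have hcast : ((n - t).choose k : ℝ) * (k.choose j : ℝ)
          = ((n - t).choose j : ℝ) * ((n - t - j).choose (k - j) : ℝ) := by
        exact_mod_cast congrArg (Nat.cast : ℕ → ℝ) hid
      calc (((n - t).choose k : ℝ) * (k.choose j : ℝ)) * A j
          = ((n - t).choose j : ℝ) * (((n - t - j).choose (k - j) : ℝ) * A j) := by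
            rw [hcast]; ring
        _ ≤ ((n - t).choose j : ℝ) * ((k.choose j : ℝ) * A k) := h2
        _ = (((n - t).choose j : ℝ) * (k.choose j : ℝ)) * A k := by ring
    have := mul_le_mul_of_nonneg_right h3 (le_of_lt (inv_pos.mpr hckj))
    calc A j * ((n - t).choose k : ℝ)
        = (((n - t).choose k : ℝ) * (k.choose j : ℝ)) * A j * (k.choose j : ℝ)⁻¹ := by
          field_simp
      _ ≤ (((n - t).choose j : ℝ) * (k.choose j : ℝ)) * A k * (k.choose j : ℝ)⁻¹ := this
      _ = ((n - t).choose j : ℝ) * A k := by field_simp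
  -- Vandermonde
  have hvand : ∑ j ∈ Finset.range (k + 1),
      (t.choose (k - j) : ℝ) * ((n - t).choose j : ℝ) = (n.choose k : ℝ) := by
    have h1 : ((n - t) + t).choose k
        = ∑ ij ∈ Finset.HasAntidiagonal.antidiagonal k, (n - t).choose ij.1 * t.choose ij.2 :=
      Nat.add_choose_eq (n - t) t k
    rw [Nat.sub_add_cancel ht] at h1
    rw [Finset.Nat.sum_antidiagonal_eq_sum_range_succ_mk] at h1
    rw [h1]
    push_cast
    exact Finset.sum_congr rfl fun j _ => by ring
  -- put everything together
  have hnum2 : ∑ j ∈ Finset.range (k + 1), (t.choose (k - j) : ℝ) * A j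
      ≤ (n.choose k : ℝ) * (A k / ((n - t).choose k : ℝ)) := by
    rw [← hvand, Finset.sum_mul]
    refine Finset.sum_le_sum fun j hj => ?_
    have := hAj j hj
    have hstep : A j ≤ ((n - t).choose j : ℝ) * A k / ((n - t).choose k : ℝ) := by
      rw [le_div_iff₀ hCk]
      linarith
    calc (t.choose (k - j) : ℝ) * A j
        ≤ (t.choose (k - j) : ℝ) * (((n - t).choose j : ℝ) * A k / ((n - t).choose k : ℝ)) :=
          mul_le_mul_of_nonneg_left hstep (by positivity)
      _ = (t.choose (k - j) : ℝ) * ((n - t).choose j : ℝ) * (A k / ((n - t).choose k : ℝ)) := by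
          ring
  rw [hnum1]
  calc (∑ j ∈ Finset.range (k + 1), (t.choose (k - j) : ℝ) * A j) / (n.choose k : ℝ)
      ≤ ((n.choose k : ℝ) * (A k / ((n - t).choose k : ℝ))) / (n.choose k : ℝ) := by
        gcongr
    _ = A k / ((n - t).choose k : ℝ) := by
        rw [mul_div_cancel_left₀ _ hCn.ne']

end
end
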